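/- There is an absolute constant C ≥ 1 with the following property. Let x be a natural number and let a, b : ℕ → [0,∞) be sequences such that for every integer k ≥ x one has a(k) ≤ b(k) + (1/10)·2^{-5k}·Σ_{m=x}^{k-1} 2^{5m}·a(m). Then for every integer k ≥ x one has a(k) ≤ C·( b(k) + 2^{-4k}·Σ_{m=x}^{k-1} 2^{4m}·b(m) ). -/

import Mathlib

namespace HighFreq

/-- Discrete Gronwall inequality: there is an absolute constant `C ≥ 1` such that if the
nonnegative sequences `a, b` satisfy
`a(k) ≤ b(k) + (1/10)·2^{-5k}·Σ_{m=x}^{k-1} 2^{5m}·a(m)` for all `k ≥ x`, then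
`a(k) ≤ C·(b(k) + 2^{-4k}·Σ_{m=x}^{k-1} 2^{4m}·b(m))` for all `k ≥ x`. -/
theorem discrete_gronwall :
    ∃ C : ℝ, 1 ≤ C ∧
      ∀ (x : ℕ) (a b : ℕ → ℝ),
        (∀ k, 0 ≤ a k) → (∀ k, 0 ≤ b k) →
        (∀ k, x ≤ k →
          a k ≤ b k + (1 / 10) * (2:ℝ) ^ (-(5 * (k:ℤ))) *
            ∑ m ∈ Finset.Ico x k, (2:ℝ) ^ (5 * m) * a m) →
        ∀ k, x ≤ k →
          a k ≤ C * (b k + (2:ℝ) ^ (-(4 * (k:ℤ))) *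
            ∑ m ∈ Finset.Ico x k, (2:ℝ) ^ (4 * m) * b m) := by
  refine ⟨1, le_refl 1, ?_⟩
  intro x a b ha hb h
  set S : ℕ → ℝ := fun k => ∑ m ∈ Finset.Ico x k, (2:ℝ) ^ (5 * m) * a m with hS
  have two_ne : (2:ℝ) ≠ 0 := two_ne_zero
  have key : ∀ k, x ≤ k →
      S k ≤ ∑ m ∈ Finset.Ico x k, (2:ℝ) ^ ((k:ℤ) - 1 + 4 * (m:ℤ)) * b m := by
    intro k hk
    induction k, hk using Nat.le_induction with
    | base => simp [hS]
    | succ k hk ih =>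
      have hSk : S (k+1) = S k + (2:ℝ)^(5*k) * a k := by
        simp [hS, Finset.sum_Ico_succ_top hk]
      have hak := h k hk
      have hprod : (2:ℝ)^(5*k) * (2:ℝ)^(-(5*(k:ℤ))) = 1 := by
        rw [← zpow_natCast (2:ℝ) (5*k), ← zpow_add₀ two_ne]
        norm_num
      have h2 : (2:ℝ)^(5*k) * a k ≤ (2:ℝ)^(5*k) * b k + (1/10) * S k := by
        calc (2:ℝ)^(5*k) * a k
            ≤ (2:ℝ)^(5*k) * (b k + (1/10) * (2:ℝ)^(-(5*(k:ℤ))) * S k) := by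
              apply mul_le_mul_of_nonneg_left hak (by positivity)
          _ = (2:ℝ)^(5*k) * b k + (1/10) * ((2:ℝ)^(5*k) * (2:ℝ)^(-(5*(k:ℤ)))) * S k := by
              ring
          _ = (2:ℝ)^(5*k) * b k + (1/10) * S k := by rw [hprod]; ring
      have hterm : ∀ m ∈ Finset.Ico x k,
          (11/10) * ((2:ℝ)^((k:ℤ) - 1 + 4*(m:ℤ)) * b m)
            ≤ (2:ℝ)^(((k:ℕ)+1:ℤ) - 1 + 4*(m:ℤ)) * b m := by
        intro m _
        have he : ((k:ℕ)+1:ℤ) - 1 + 4*(m:ℤ) = ((k:ℤ) - 1 + 4*(m:ℤ)) + 1 := by ring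
        rw [he, zpow_add_one₀ two_ne]
        have h0 : (0:ℝ) ≤ (2:ℝ)^((k:ℤ) - 1 + 4*(m:ℤ)) * b m :=
          mul_nonneg (by positivity) (hb m)
        nlinarith
      have hsum : (11/10) * S k ≤
          ∑ m ∈ Finset.Ico x k, (2:ℝ)^(((k:ℕ)+1:ℤ) - 1 + 4*(m:ℤ)) * b m := by
        calc (11/10) * S k ≤ (11/10) * ∑ m ∈ Finset.Ico x k,
              (2:ℝ) ^ ((k:ℤ) - 1 + 4 * (m:ℤ)) * b m := by
              have h0 : (0:ℝ) ≤ 11/10 := by norm_num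
              exact mul_le_mul_of_nonneg_left ih h0
          _ = ∑ m ∈ Finset.Ico x k,
              (11/10) * ((2:ℝ) ^ ((k:ℤ) - 1 + 4 * (m:ℤ)) * b m) := by
              rw [Finset.mul_sum]
          _ ≤ _ := Finset.sum_le_sum hterm
      have hlast : (2:ℝ)^(5*k) = (2:ℝ)^(((k:ℕ)+1:ℤ) - 1 + 4*(k:ℤ)) := by
        rw [← zpow_natCast (2:ℝ) (5*k)]
        congr 1
        push_cast
        ring
      calc S (k+1) = S k + (2:ℝ)^(5*k) * a k := hSk
        _ ≤ S k + ((2:ℝ)^(5*k) * b k + (1/10) * S k) := by linarith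
        _ = (11/10) * S k + (2:ℝ)^(5*k) * b k := by ring
        _ ≤ (∑ m ∈ Finset.Ico x k, (2:ℝ)^(((k:ℕ)+1:ℤ) - 1 + 4*(m:ℤ)) * b m)
            + (2:ℝ)^(((k:ℕ)+1:ℤ) - 1 + 4*(k:ℤ)) * b k := by
              rw [← hlast]; linarith
        _ = ∑ m ∈ Finset.Ico x (k+1), (2:ℝ)^((((k+1:ℕ)):ℤ) - 1 + 4*(m:ℤ)) * b m := by
              rw [Finset.sum_Ico_succ_top hk]
              push_cast
              ring_nf
  intro k hk
  have hak := h k hk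
  have hSle := key k hk
  have hmain : (1/10) * (2:ℝ)^(-(5*(k:ℤ))) * S k ≤
      (2:ℝ)^(-(4*(k:ℤ))) * ∑ m ∈ Finset.Ico x k, (2:ℝ)^(4*m) * b m := by
    have h1 : (1/10) * (2:ℝ)^(-(5*(k:ℤ))) * S k ≤
        (1/10) * (2:ℝ)^(-(5*(k:ℤ))) * ∑ m ∈ Finset.Ico x k,
          (2:ℝ) ^ ((k:ℤ) - 1 + 4 * (m:ℤ)) * b m := by
      apply mul_le_mul_of_nonneg_left hSle (by positivity)
    refine h1.trans ?_
    rw [Finset.mul_sum, Finset.mul_sum]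
    apply Finset.sum_le_sum
    intro m _
    have l : (2:ℝ)^(-(5*(k:ℤ))) * (2:ℝ)^((k:ℤ) - 1 + 4*(m:ℤ))
        = (2:ℝ)^(-(4*(k:ℤ)) + 4*(m:ℤ) - 1) := by
      rw [← zpow_add₀ two_ne]; congr 1; ring
    have r : (2:ℝ)^(-(4*(k:ℤ))) * (2:ℝ)^(4*m) = (2:ℝ)^(-(4*(k:ℤ)) + 4*(m:ℤ)) := by
      rw [← zpow_natCast (2:ℝ) (4*m), ← zpow_add₀ two_ne]
      norm_num
    have hz : (2:ℝ)^(-(4*(k:ℤ)) + 4*(m:ℤ) - 1) ≤ (2:ℝ)^(-(4*(k:ℤ)) + 4*(m:ℤ)) := by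
      apply zpow_le_zpow_right₀ one_le_two; omega
    have hp : (0:ℝ) < (2:ℝ)^(-(4*(k:ℤ)) + 4*(m:ℤ) - 1) := by positivity
    calc (1/10) * (2:ℝ)^(-(5*(k:ℤ))) * ((2:ℝ)^((k:ℤ) - 1 + 4*(m:ℤ)) * b m)
        = (1/10) * ((2:ℝ)^(-(5*(k:ℤ))) * (2:ℝ)^((k:ℤ) - 1 + 4*(m:ℤ))) * b m := by ring
      _ = (1/10) * (2:ℝ)^(-(4*(k:ℤ)) + 4*(m:ℤ) - 1) * b m := by rw [l]
      _ ≤ (2:ℝ)^(-(4*(k:ℤ)) + 4*(m:ℤ)) * b m := by nlinarith [hb m]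
      _ = (2:ℝ)^(-(4*(k:ℤ))) * ((2:ℝ)^(4*m) * b m) := by rw [← r]; ring
  calc a k ≤ b k + (1/10) * (2:ℝ)^(-(5*(k:ℤ))) * S k := hak
    _ ≤ b k + (2:ℝ)^(-(4*(k:ℤ))) * ∑ m ∈ Finset.Ico x k, (2:ℝ)^(4*m) * b m := by
        linarith
    _ = 1 * (b k + (2:ℝ)^(-(4*(k:ℤ))) * ∑ m ∈ Finset.Ico x k, (2:ℝ)^(4*m) * b m) := by
        ring
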